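/- The linear map i₀₁ : Ṽ → Λ³V ⊗ V* is surjective; consequently its kernel I₀₁ = ker i₀₁ has finrank 80. -/

import Mathlib

open TensorProduct

variable (K V : Type*) [Field K] [AddCommGroup V] [Module K V]

-- Helper instances (the canonical tensor product instances; registering them here merely
-- speeds up instance search, which otherwise gets lost unfolding `⋀[K]^n V`).
noncomputable instance : AddCommGroup (↥(⋀[K]^2 V) ⊗[K] Module.Dual K V) :=
  TensorProduct.addCommGroup

noncomputable instance : AddCommGroup (V ⊗[K] (↥(⋀[K]^2 V) ⊗[K] Module.Dual K V)) :=
  TensorProduct.addCommGroup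

noncomputable instance : AddCommGroup (↥(⋀[K]^3 V) ⊗[K] Module.Dual K V) :=
  TensorProduct.addCommGroup

/-- The wedge `q ∧ r` of two vectors, as an element of the second exterior power. -/
def wedge2 (q r : V) : ⋀[K]^2 V :=
  ⟨ExteriorAlgebra.ιMulti K 2 ![q, r],
    ExteriorAlgebra.ιMulti_range K 2 (Set.mem_range_self _)⟩

/-- The wedge `p ∧ q ∧ r` of three vectors, as an element of the third exterior power. -/
def wedge3 (p q r : V) : ⋀[K]^3 V :=
  ⟨ExteriorAlgebra.ιMulti K 3 ![p, q, r],
    ExteriorAlgebra.ιMulti_range K 3 (Set.mem_range_self _)⟩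

/-- The 96-dimensional space `Ṽ = V ⊗ Λ²V ⊗ V*`. -/
abbrev FlagTensor := V ⊗[K] ↥(⋀[K]^2 V) ⊗[K] (Module.Dual K V)

section Aux

open ExteriorAlgebra

variable {K V : Type*} [Field K] [AddCommGroup V] [Module K V]

/-- All simple wedges, as elements of the exterior power, span it. -/
lemma span_iMulti_subtype (n : ℕ) :
    Submodule.span K (Set.range fun v : Fin n → V =>
      (⟨ιMulti K n v, ιMulti_range K n (Set.mem_range_self _)⟩ : ⋀[K]^n V)) = ⊤ := by
  apply Submodule.map_injective_of_injective
    (show Function.Injective (⋀[K]^n V).subtype from Subtype.coe_injective)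
  rw [Submodule.map_span, Submodule.map_top, Submodule.range_subtype]
  conv_rhs => rw [← ιMulti_span_fixedDegree]
  congr 1
  ext x
  constructor
  · rintro ⟨-, ⟨v, rfl⟩, rfl⟩; exact ⟨v, rfl⟩
  · rintro ⟨v, rfl⟩; exact ⟨_, ⟨v, rfl⟩, rfl⟩

variable {N : ℕ} (b : Module.Basis (Fin N) K V) (n : ℕ)

/-- The wedge of basis vectors indexed by an `n`-element subset of `Fin N`. -/
noncomputable def extFam (s : {s : Finset (Fin N) // s.card = n}) : ⋀[K]^n V :=
  ⟨ιMulti K n fun i => b (s.1.orderIsoOfFin s.2 i),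
    ιMulti_range K n (Set.mem_range_self _)⟩

/-- A dual functional on the exterior power, given by a minor of the coordinate matrix. -/
noncomputable def extDual (s : {s : Finset (Fin N) // s.card = n}) :
    ↥(⋀[K]^n V) →ₗ[K] K :=
  (liftAlternating (Function.update 0 n
    (Matrix.detRowAlternating.compLinearMap
      (LinearMap.pi fun j => b.coord (s.1.orderIsoOfFin s.2 j))))).comp
    (⋀[K]^n V).subtype

lemma extDual_apply (s t : {s : Finset (Fin N) // s.card = n}) :
    extDual b n s (extFam b n t) = if s = t then 1 else 0 := by
  classical
  rw [extDual, extFam, LinearMap.comp_apply, Submodule.subtype_apply,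
    liftAlternating_apply_ιMulti, Function.update_self,
    AlternatingMap.compLinearMap_apply]
  have hmat : ∀ i j, (LinearMap.pi fun j => b.coord (s.1.orderIsoOfFin s.2 j))
      (b (t.1.orderIsoOfFin t.2 i)) j
      = if ((t.1.orderIsoOfFin t.2 i : Fin N) = (s.1.orderIsoOfFin s.2 j : Fin N))
        then 1 else 0 := by
    intro i j
    simp [Module.Basis.coord_apply, Module.Basis.repr_self, Finsupp.single_apply, eq_comm]
  by_cases hst : s = t
  · subst hst
    rw [if_pos rfl]
    have h1 : (fun i => (LinearMap.pi fun j => b.coord (s.1.orderIsoOfFin s.2 j))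
        (b (s.1.orderIsoOfFin s.2 i))) = (1 : Matrix (Fin n) (Fin n) K) := by
      funext i j
      rw [hmat, Matrix.one_apply]
      congr 1
      simp only [eq_iff_iff]
      constructor
      · intro h
        exact (s.1.orderIsoOfFin s.2).injective (Subtype.coe_injective h)
      · rintro rfl; rfl
    rw [h1]
    exact Matrix.det_one
  · rw [if_neg hst]
    obtain ⟨j0, hj0s, hj0t⟩ : ∃ x ∈ s.1, x ∉ t.1 := by
      by_contra h
      push_neg at h
      exact hst (Subtype.ext (Finset.eq_of_subset_of_card_le h (by rw [s.2, t.2])))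
    refine Matrix.det_eq_zero_of_column_eq_zero ((s.1.orderIsoOfFin s.2).symm ⟨j0, hj0s⟩)
      fun i => ?_
    rw [hmat, if_neg]
    intro h
    apply hj0t
    have : (s.1.orderIsoOfFin s.2 ((s.1.orderIsoOfFin s.2).symm ⟨j0, hj0s⟩) : Fin N) = j0 := by
      rw [OrderIso.apply_symm_apply]
    rw [this] at h
    rw [← h]
    exact (t.1.orderIsoOfFin t.2 i).2

lemma extFam_li : LinearIndependent K (extFam b n) := by
  classical
  rw [Fintype.linearIndependent_iff]
  intro g hg s
  have h := congrArg (extDual b n s) hg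
  rw [map_sum, map_zero] at h
  simp only [map_smul, extDual_apply, smul_eq_mul, mul_ite, mul_one, mul_zero] at h
  rwa [Finset.sum_ite_eq, if_pos (Finset.mem_univ s)] at h

lemma extFam_span : Submodule.span K (Set.range (extFam b n)) = ⊤ := by
  classical
  rw [eq_top_iff, ← span_iMulti_subtype (K := K) (V := V) n, Submodule.span_le]
  rintro x ⟨v, rfl⟩
  have key : ιMulti K n v ∈
      Submodule.map (⋀[K]^n V).subtype (Submodule.span K (Set.range (extFam b n))) := by
    have hveq : v = fun i => ∑ j, b.repr (v i) j • b j :=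
      funext fun i => (b.sum_repr (v i)).symm
    have expand : ιMulti K n v
        = ∑ r : Fin n → Fin N, (∏ i, b.repr (v i) (r i)) • ιMulti K n fun i => b (r i) := by
      conv_lhs => rw [hveq]
      rw [show (ιMulti K n (fun i => ∑ j, b.repr (v i) j • b j) : ExteriorAlgebra K V)
        = (ιMulti K n).toMultilinearMap (fun i => ∑ j, b.repr (v i) j • b j) from rfl,
        MultilinearMap.map_sum]
      refine Finset.sum_congr rfl fun r _ => ?_
      exact (ιMulti K n).toMultilinearMap.map_smul_univ _ _
    rw [expand]
    refine Submodule.sum_mem _ fun r _ => Submodule.smul_mem _ _ ?_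
    by_cases hr : Function.Injective r
    · set sfin := Finset.univ.image r with hsfin
      have hcard : sfin.card = n := by
        rw [hsfin, Finset.card_image_of_injective _ hr, Finset.card_univ, Fintype.card_fin]
      set e := sfin.orderIsoOfFin hcard with he
      have hmem : ∀ i, r i ∈ sfin := fun i => Finset.mem_image_of_mem r (Finset.mem_univ i)
      have hf0 : Function.Bijective fun i => e.symm ⟨r i, hmem i⟩ :=
        Finite.injective_iff_bijective.mp fun i j h =>
          hr (congrArg Subtype.val (e.symm.injective h))
      set σ := Equiv.ofBijective _ hf0 with hσ
      have hcomp : (fun i => b (r i)) = (fun i => b (e i)) ∘ σ := by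
        funext i
        simp only [Function.comp_apply, hσ, Equiv.ofBijective_apply, he]
        rw [OrderIso.apply_symm_apply]
      have hbase : (ιMulti K n fun i => b (e i)) ∈
          Submodule.map (⋀[K]^n V).subtype (Submodule.span K (Set.range (extFam b n))) :=
        ⟨extFam b n ⟨sfin, hcard⟩, Submodule.subset_span ⟨⟨sfin, hcard⟩, rfl⟩, rfl⟩
      rw [hcomp, AlternatingMap.map_perm]
      rcases Int.units_eq_one_or (Equiv.Perm.sign σ) with h | h
      · rw [h, one_smul]; exact hbase
      · rw [h, Units.neg_smul, one_smul]
        exact Submodule.neg_mem _ hbase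
    · rw [(ιMulti K n).map_eq_zero_of_not_injective _ fun hinj => hr fun i j h => hinj (congrArg b h)]
      exact Submodule.zero_mem _
  obtain ⟨y, hy, hxy⟩ := key
  have hx : (⟨ιMulti K n v, ιMulti_range K n (Set.mem_range_self _)⟩ : ⋀[K]^n V) = y :=
    Subtype.ext hxy.symm
  exact Set.mem_of_eq_of_mem hx hy

/-- A basis of the `n`-th exterior power indexed by `n`-element subsets. -/
noncomputable def extBasis : Module.Basis {s : Finset (Fin N) // s.card = n} K (⋀[K]^n V) :=
  Module.Basis.mk (extFam_li b n) (le_of_eq (extFam_span b n).symm)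

lemma finrank_extPower (b : Module.Basis (Fin N) K V) (n : ℕ) : Module.finrank K (⋀[K]^n V) = N.choose n := by
  classical
  rw [Module.finrank_eq_card_basis (extBasis b n), Fintype.card_finset_len,
    Fintype.card_fin]

lemma finiteDimensional_extPower (b : Module.Basis (Fin N) K V) (n : ℕ) : FiniteDimensional K (⋀[K]^n V) :=
  Module.Finite.of_basis (extBasis b n)

end Aux

/-- The linear map `i₀₁ : Ṽ → Λ³V ⊗ V*`, `p ⊗ t ⊗ e* ↦ (p ∧ t) ⊗ e*`, is surjective, and
consequently its kernel `I₀₁` has dimension `96 − 16 = 80`. Here the wedge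
`V × Λ²V → Λ³V` is given as a bilinear map `w` with `w p (q ∧ r) = p ∧ q ∧ r`. -/
theorem i01_surjective_and_finrank_ker
    (hV : Module.finrank K V = 4)
    (w : V →ₗ[K] ↥(⋀[K]^2 V) →ₗ[K] ↥(⋀[K]^3 V))
    (hw : ∀ p q r : V, w p (wedge2 K V q r) = wedge3 K V p q r)
    (i01 : FlagTensor K V →ₗ[K] (↥(⋀[K]^3 V) ⊗[K] Module.Dual K V))
    (hi01 : ∀ (p : V) (t : ⋀[K]^2 V) (e : Module.Dual K V),
      i01 (p ⊗ₜ[K] t ⊗ₜ[K] e) = (w p t) ⊗ₜ[K] e) :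
    Function.Surjective i01 ∧ Module.finrank K (LinearMap.ker i01) = 80 := by
  
  classical
  have hfd : FiniteDimensional K V := Module.finite_of_finrank_pos (by rw [hV]; norm_num)
  let b : Module.Basis (Fin 4) K V := Module.finBasisOfFinrankEq K V hV
  haveI fd2 : FiniteDimensional K (⋀[K]^2 V) := finiteDimensional_extPower b 2
  haveI fd3 : FiniteDimensional K (⋀[K]^3 V) := finiteDimensional_extPower b 3
  have h2 : Module.finrank K (⋀[K]^2 V) = 6 := by rw [finrank_extPower b 2]; rfl
  have h3 : Module.finrank K (⋀[K]^3 V) = 4 := by rw [finrank_extPower b 3]; rfl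
  have hsurj : Function.Surjective i01 := by
    rw [← LinearMap.range_eq_top, eq_top_iff]
    rintro x -
    induction x using TensorProduct.induction_on with
    | zero => exact Submodule.zero_mem _
    | add x y hx hy => exact Submodule.add_mem _ hx hy
    | tmul s e =>
      suffices h : (⊤ : Submodule K ↥(⋀[K]^3 V)) ≤ Submodule.comap
          ((TensorProduct.mk K ↥(⋀[K]^3 V) (Module.Dual K V)).flip e)
          (LinearMap.range i01) from h Submodule.mem_top
      rw [← span_iMulti_subtype (K := K) (V := V) 3, Submodule.span_le]
      rintro z ⟨v, rfl⟩
      simp only [SetLike.mem_coe, Submodule.mem_comap]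
      refine ⟨v 0 ⊗ₜ[K] wedge2 K V (v 1) (v 2) ⊗ₜ[K] e, ?_⟩
      rw [hi01, hw]
      have hv : wedge3 K V (v 0) (v 1) (v 2)
          = ⟨ExteriorAlgebra.ιMulti K 3 v,
              ExteriorAlgebra.ιMulti_range K 3 (Set.mem_range_self _)⟩ := by
        apply Subtype.ext
        show ExteriorAlgebra.ιMulti K 3 ![v 0, v 1, v 2] = ExteriorAlgebra.ιMulti K 3 v
        congr 1
        funext i
        fin_cases i <;> rfl
      rw [hv]
      rfl
  refine ⟨hsurj, ?_⟩
  have hdom : Module.finrank K (FlagTensor K V) = 96 := by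
    rw [Module.finrank_tensorProduct, Module.finrank_tensorProduct, hV, h2,
      Subspace.dual_finrank_eq, hV]
  have hcod : Module.finrank K (↥(⋀[K]^3 V) ⊗[K] Module.Dual K V) = 16 := by
    rw [Module.finrank_tensorProduct, h3, Subspace.dual_finrank_eq, hV]
  have hrn := LinearMap.finrank_range_add_finrank_ker i01
  rw [LinearMap.range_eq_top.mpr hsurj, finrank_top, hcod, hdom] at hrn
  omega
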